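/- There exist constants C, R > 0 such that for all x', y' ∈ ℝ² with x' − y' ∉ 2πℤ² and all a, b ∈ ℝ²: |a| + |b| ≤ C · d(x', y')^{−1} · max_{k ∈ ℤ²∖{(0,0)}, |k| ≤ R} | u_k(x')·a + u_k(y')·b |, where d(x', y') := min_{m ∈ ℤ²} |x' − y' − 2πm| is the distance between x' and y' on the torus (ℝ/2πℤ)². -/

import Mathlib

open Real

/-- The real Fourier basis function `e_k` on `ℝ²`. -/
noncomputable def eFun (k : ℤ × ℤ) (x : ℝ × ℝ) : ℝ :=
  if 0 < k.1 ∨ (k.1 = 0 ∧ 0 < k.2) then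
    Real.sin ((k.1 : ℝ) * x.1 + (k.2 : ℝ) * x.2)
  else
    Real.cos ((k.1 : ℝ) * x.1 + (k.2 : ℝ) * x.2)

/-- The divergence-free velocity field `u_k := ∇^⊥ Δ^{-1} e_k = -|k|^{-2} ∇^⊥ e_k`,
where `∇^⊥ f = (-∂₂ f, ∂₁ f)`. -/
noncomputable def uFun (k : ℤ × ℤ) (x : ℝ × ℝ) : ℝ × ℝ :=
  (-(((k.1 : ℝ) ^ 2 + (k.2 : ℝ) ^ 2)⁻¹)) •
    (-(fderiv ℝ (eFun k) x (0, 1)), fderiv ℝ (eFun k) x (1, 0))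

/-- The Euclidean norm on `ℝ²`. -/
noncomputable def enorm2 (a : ℝ × ℝ) : ℝ := Real.sqrt (a.1 ^ 2 + a.2 ^ 2)

/-- The Euclidean dot product on `ℝ²`. -/
def dotR (a b : ℝ × ℝ) : ℝ := a.1 * b.1 + a.2 * b.2

/-- The distance on the torus `(ℝ/2πℤ)²`. -/
noncomputable def torusDist (x y : ℝ × ℝ) : ℝ :=
  sInf {t | ∃ m : ℤ × ℤ,
    t = enorm2 (x.1 - y.1 - 2 * π * (m.1 : ℝ), x.2 - y.2 - 2 * π * (m.2 : ℝ))}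

/- ## Auxiliary lemmas -/

lemma fderiv_sin_lin (p q : ℝ) (x w : ℝ × ℝ) :
    fderiv ℝ (fun y : ℝ × ℝ => Real.sin (p * y.1 + q * y.2)) x w
      = Real.cos (p * x.1 + q * x.2) * (p * w.1 + q * w.2) := by
  have hL : HasFDerivAt (fun y : ℝ × ℝ => p * y.1 + q * y.2)
      (p • (ContinuousLinearMap.fst ℝ ℝ ℝ) + q • (ContinuousLinearMap.snd ℝ ℝ ℝ)) x :=
    ((hasFDerivAt_fst (p := x)).const_mul p).add ((hasFDerivAt_snd (p := x)).const_mul q)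
  have hs' : HasFDerivAt (fun y : ℝ × ℝ => Real.sin (p * y.1 + q * y.2))
      (Real.cos (p * x.1 + q * x.2) •
        (p • (ContinuousLinearMap.fst ℝ ℝ ℝ) + q • (ContinuousLinearMap.snd ℝ ℝ ℝ))) x :=
    by have := (Real.hasDerivAt_sin (p * x.1 + q * x.2)).comp_hasFDerivAt x hL; exact this
  rw [hs'.fderiv]
  simp [mul_comm]
  ring

lemma fderiv_cos_lin (p q : ℝ) (x w : ℝ × ℝ) :
    fderiv ℝ (fun y : ℝ × ℝ => Real.cos (p * y.1 + q * y.2)) x w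
      = -Real.sin (p * x.1 + q * x.2) * (p * w.1 + q * w.2) := by
  have hL : HasFDerivAt (fun y : ℝ × ℝ => p * y.1 + q * y.2)
      (p • (ContinuousLinearMap.fst ℝ ℝ ℝ) + q • (ContinuousLinearMap.snd ℝ ℝ ℝ)) x :=
    ((hasFDerivAt_fst (p := x)).const_mul p).add ((hasFDerivAt_snd (p := x)).const_mul q)
  have hs' : HasFDerivAt (fun y : ℝ × ℝ => Real.cos (p * y.1 + q * y.2))
      ((-Real.sin (p * x.1 + q * x.2)) •
        (p • (ContinuousLinearMap.fst ℝ ℝ ℝ) + q • (ContinuousLinearMap.snd ℝ ℝ ℝ))) x :=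
    by have := (Real.hasDerivAt_cos (p * x.1 + q * x.2)).comp_hasFDerivAt x hL; exact this
  rw [hs'.fderiv]
  simp [mul_comm]
  ring

lemma dot_uFun (k : ℤ × ℤ) (x a : ℝ × ℝ) :
    dotR (uFun k x) a =
      (((k.1 : ℝ) ^ 2 + (k.2 : ℝ) ^ 2))⁻¹ *
      (if 0 < k.1 ∨ (k.1 = 0 ∧ 0 < k.2) then -Real.cos ((k.1 : ℝ) * x.1 + (k.2 : ℝ) * x.2)
        else Real.sin ((k.1 : ℝ) * x.1 + (k.2 : ℝ) * x.2)) *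
      (-(k.2 : ℝ) * a.1 + (k.1 : ℝ) * a.2) := by
  by_cases h : 0 < k.1 ∨ (k.1 = 0 ∧ 0 < k.2)
  · have he : eFun k = fun y : ℝ × ℝ => Real.sin ((k.1 : ℝ) * y.1 + (k.2 : ℝ) * y.2) := by
      funext y; simp [eFun, h]
    rw [uFun, dotR, he]
    simp only [fderiv_sin_lin, if_pos h]
    simp only [Prod.smul_fst, Prod.smul_snd, smul_eq_mul]
    ring
  · have he : eFun k = fun y : ℝ × ℝ => Real.cos ((k.1 : ℝ) * y.1 + (k.2 : ℝ) * y.2) := by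
      funext y; simp [eFun, h]
    rw [uFun, dotR, he]
    simp only [fderiv_cos_lin, if_neg h]
    simp only [Prod.smul_fst, Prod.smul_snd, smul_eq_mul]
    ring

lemma du_a (x c : ℝ × ℝ) : dotR (uFun ((1:ℤ),(0:ℤ)) x) c = -(Real.cos x.1 * c.2) := by
  rw [dot_uFun]; norm_num
lemma du_b (x c : ℝ × ℝ) : dotR (uFun ((-1:ℤ),(0:ℤ)) x) c = Real.sin x.1 * c.2 := by
  rw [dot_uFun]; norm_num
lemma du_c (x c : ℝ × ℝ) : dotR (uFun ((0:ℤ),(1:ℤ)) x) c = Real.cos x.2 * c.1 := by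
  rw [dot_uFun]; norm_num
lemma du_d (x c : ℝ × ℝ) : dotR (uFun ((0:ℤ),(-1:ℤ)) x) c = -(Real.sin x.2 * c.1) := by
  rw [dot_uFun]; norm_num
lemma du_e (x c : ℝ × ℝ) :
    dotR (uFun ((1:ℤ),(1:ℤ)) x) c = Real.cos (x.1 + x.2) * (c.1 - c.2) / 2 := by
  rw [dot_uFun]; norm_num; ring
lemma du_f (x c : ℝ × ℝ) :
    dotR (uFun ((-1:ℤ),(-1:ℤ)) x) c = -(Real.sin (x.1 + x.2) * (c.1 - c.2)) / 2 := by
  rw [dot_uFun]; norm_num; ring_nf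
  rw [show -x.1 - x.2 = -(x.1+x.2) by ring, Real.sin_neg]; ring
lemma du_g (x c : ℝ × ℝ) :
    dotR (uFun ((2:ℤ),(0:ℤ)) x) c = -(Real.cos (2*x.1) * c.2) / 2 := by
  rw [dot_uFun]; norm_num; ring
lemma du_h (x c : ℝ × ℝ) :
    dotR (uFun ((-2:ℤ),(0:ℤ)) x) c = Real.sin (2*x.1) * c.2 / 2 := by
  rw [dot_uFun]; norm_num; ring_nf
lemma du_i (x c : ℝ × ℝ) :
    dotR (uFun ((0:ℤ),(2:ℤ)) x) c = Real.cos (2*x.2) * c.1 / 2 := by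
  rw [dot_uFun]; norm_num; ring
lemma du_j (x c : ℝ × ℝ) :
    dotR (uFun ((0:ℤ),(-2:ℤ)) x) c = -(Real.sin (2*x.2) * c.1) / 2 := by
  rw [dot_uFun]; norm_num; ring_nf

lemma combo (φ ψ α β E : ℝ) (h1 : |Real.cos φ * α + Real.cos ψ * β| ≤ E)
    (h2 : |Real.sin φ * α + Real.sin ψ * β| ≤ E) :
    |(α + β) * Real.cos ((φ - ψ) / 2)| ≤ 2 * E ∧
    |(α - β) * Real.sin ((φ - ψ) / 2)| ≤ 2 * E := by
  set μ := (φ + ψ) / 2 with hμ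
  set h := (φ - ψ) / 2 with hh
  have e1 : φ = μ + h := by rw [hμ, hh]; ring
  have e2 : ψ = μ - h := by rw [hμ, hh]; ring
  have id1 : (α + β) * Real.cos h =
      Real.cos μ * (Real.cos φ * α + Real.cos ψ * β) +
      Real.sin μ * (Real.sin φ * α + Real.sin ψ * β) := by
    rw [e1, e2, Real.cos_add, Real.sin_add, Real.cos_sub, Real.sin_sub]
    linear_combination (-(α + β) * Real.cos h) * (Real.sin_sq_add_cos_sq μ)
  have id2 : (α - β) * Real.sin h =
      (-Real.sin μ) * (Real.cos φ * α + Real.cos ψ * β) +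
      Real.cos μ * (Real.sin φ * α + Real.sin ψ * β) := by
    rw [e1, e2, Real.cos_add, Real.sin_add, Real.cos_sub, Real.sin_sub]
    linear_combination (-(α - β) * Real.sin h) * (Real.sin_sq_add_cos_sq μ)
  constructor
  · rw [id1]
    calc |Real.cos μ * (Real.cos φ * α + Real.cos ψ * β) +
          Real.sin μ * (Real.sin φ * α + Real.sin ψ * β)|
        ≤ |Real.cos μ * (Real.cos φ * α + Real.cos ψ * β)| +
          |Real.sin μ * (Real.sin φ * α + Real.sin ψ * β)| := abs_add_le _ _
      _ ≤ 1 * E + 1 * E := by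
          rw [abs_mul, abs_mul]
          gcongr <;> [exact Real.abs_cos_le_one μ; exact Real.abs_sin_le_one μ]
      _ = 2 * E := by ring
  · rw [id2]
    calc |(-Real.sin μ) * (Real.cos φ * α + Real.cos ψ * β) +
          Real.cos μ * (Real.sin φ * α + Real.sin ψ * β)|
        ≤ |(-Real.sin μ) * (Real.cos φ * α + Real.cos ψ * β)| +
          |Real.cos μ * (Real.sin φ * α + Real.sin ψ * β)| := abs_add_le _ _
      _ ≤ 1 * E + 1 * E := by
          rw [abs_mul, abs_mul, abs_neg]
          gcongr <;> [exact Real.abs_sin_le_one μ; exact Real.abs_cos_le_one μ]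
      _ = 2 * E := by ring

lemma coreU (c u M : ℝ) (hM : 0 ≤ M) (e1 : |u| * |c| ≤ 2 * M)
    (e6 : |u| * |2 * c ^ 2 - 1| ≤ 4 * M) : |u| ≤ 8 * M := by
  rcases le_or_gt (1/2) |c| with h | h
  · nlinarith [abs_nonneg u, abs_nonneg c]
  · have h2 : 1/2 ≤ |2 * c ^ 2 - 1| := by
      have hc : c ^ 2 < 1/4 := by nlinarith [abs_nonneg c, sq_abs c]
      rw [abs_sub_comm, abs_of_nonneg (by nlinarith)]
      nlinarith
    nlinarith [abs_nonneg u]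

lemma coreV (s₁ c₁ s₂ c₂ v₁ v₂ M : ℝ) (hM : 0 ≤ M)
    (hs2 : |s₂| ≤ 1) (hc2 : |c₂| ≤ 1) (hpy : s₁ ^ 2 + c₁ ^ 2 = 1)
    (e2 : |v₂| * |s₁| ≤ 2 * M) (e4 : |v₁| * |s₂| ≤ 2 * M)
    (e5 : |v₁ - v₂| * |s₁ * c₂ + c₁ * s₂| ≤ 4 * M) :
    |v₂| * (|s₁| + |s₂|) ≤ 10 * M := by
  rcases le_or_gt |s₂| (4 * |s₁|) with h | h
  · nlinarith [abs_nonneg v₂, abs_nonneg s₁]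
  · have hs1 : |s₁| < 1/4 := by linarith
    have hc1 : 24/25 ≤ |c₁| := by
      nlinarith [abs_nonneg c₁, sq_abs c₁, sq_abs s₁, abs_nonneg s₁]
    have key : (s₁ * c₂ + c₁ * s₂) + (-(s₁ * c₂)) = c₁ * s₂ := by ring
    have tri := abs_add_le (s₁ * c₂ + c₁ * s₂) (-(s₁ * c₂))
    rw [key, abs_neg] at tri
    have hT : (71/100) * |s₂| ≤ |s₁ * c₂ + c₁ * s₂| := by
      have h1 : |c₁ * s₂| = |c₁| * |s₂| := abs_mul _ _
      have h2 : |s₁ * c₂| = |s₁| * |c₂| := abs_mul _ _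
      nlinarith [abs_nonneg s₂, abs_nonneg s₁, abs_nonneg c₂]
    have hd : |v₁ - v₂| * |s₂| ≤ 6 * M := by
      nlinarith [abs_nonneg (v₁ - v₂), abs_nonneg s₂,
        mul_le_mul_of_nonneg_left hT (abs_nonneg (v₁ - v₂))]
    have hv2s2 : |v₂| * |s₂| ≤ 8 * M := by
      have htri : |v₂| ≤ |v₁| + |v₁ - v₂| := by
        have h' := abs_add_le (v₁ - v₂) (-v₁)
        rw [show (v₁ - v₂) + (-v₁) = -v₂ by ring, abs_neg, abs_neg] at h'
        linarith
      nlinarith [abs_nonneg s₂, abs_nonneg v₁, abs_nonneg (v₁ - v₂)]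
    nlinarith

lemma sqrt_le_abs_add (p q : ℝ) : Real.sqrt (p^2 + q^2) ≤ |p| + |q| := by
  rw [show |p| + |q| = Real.sqrt ((|p| + |q|)^2) from (Real.sqrt_sq (by positivity)).symm]
  apply Real.sqrt_le_sqrt
  nlinarith [abs_nonneg p, abs_nonneg q, sq_abs p, sq_abs q,
    mul_nonneg (abs_nonneg p) (abs_nonneg q)]

lemma abs_le_sqrt2 (p q : ℝ) : |p| ≤ Real.sqrt (p^2 + q^2) := by
  rw [← Real.sqrt_sq_eq_abs]
  exact Real.sqrt_le_sqrt (by nlinarith [sq_nonneg q])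

lemma sin_half_shift (z : ℝ) (m : ℤ) : |Real.sin ((z - 2*π*m)/2)| = |Real.sin (z/2)| := by
  have h := Real.sin_add_int_mul_pi ((z - 2*π*m)/2) m
  have e : (z - 2*π*m)/2 + m*π = z/2 := by ring
  rw [e] at h
  rw [h, abs_mul]
  have : |((-1:ℝ)) ^ m| = 1 := by
    rcases Int.even_or_odd m with he | ho
    · rw [he.neg_one_zpow]; simp
    · rw [Odd.neg_one_zpow ho]; simp
  rw [this, one_mul]

lemma half_bound (w : ℝ) (hw : |w| ≤ π) : |w| ≤ π * |Real.sin (w/2)| := by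
  have hπ := Real.pi_pos
  have h1 : Real.sin (|w|/2) = |Real.sin (w/2)| := by
    rcases abs_cases w with ⟨h, h0⟩ | ⟨h, h0⟩
    · rw [h, abs_of_nonneg]
      apply Real.sin_nonneg_of_nonneg_of_le_pi (by linarith)
      have : w ≤ π := by rw [← h]; exact hw
      linarith
    · rw [h]
      have hs : Real.sin (w/2) ≤ 0 := by
        apply Real.sin_nonpos_of_nonpos_of_neg_pi_le (by linarith)
        have : -π ≤ w := by linarith [neg_abs_le w, hw]
        linarith
      rw [abs_of_nonpos hs, show -w/2 = -(w/2) by ring, Real.sin_neg]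
  have h2 := Real.mul_le_sin (x := |w|/2) (by positivity) (by linarith [abs_nonneg w])
  rw [h1] at h2
  have h3 : 2/π * (|w|/2) = |w|/π := by ring
  rw [h3] at h2
  calc |w| = π * (|w|/π) := by field_simp
    _ ≤ π * |Real.sin (w/2)| := mul_le_mul_of_nonneg_left h2 (le_of_lt hπ)

lemma half_abs {X M : ℝ} (h : |X/2| ≤ M) : |X| ≤ 2*M := by
  rw [abs_div, abs_two] at h
  linarith


lemma final_arith (EA EB A B C D s1 s2 t M : ℝ)
    (hEA : 0 ≤ EA) (hEB : 0 ≤ EB)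
    (hT : EA + EB ≤ A + B + C + D)
    (hAn : 0 ≤ A) (hBn : 0 ≤ B) (hCn : 0 ≤ C) (hDn : 0 ≤ D)
    (hU1 : A ≤ 8*M) (hU2 : B ≤ 8*M)
    (hV1 : C*(s1+s2) ≤ 10*M) (hV2 : D*(s1+s2) ≤ 10*M)
    (hs1n : 0 ≤ s1) (hs2n : 0 ≤ s2) (hs1le : s1 ≤ 1) (hs2le : s2 ≤ 1)
    (hM : 0 ≤ M) (hup : t ≤ π*(s1+s2)) :
    (EA+EB) * t ≤ 400*M := by
  have hq1 : A*(s1+s2) ≤ 16*M := by nlinarith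
  have hq2 : B*(s1+s2) ≤ 16*M := by nlinarith
  have hTS : (A+B+C+D)*(s1+s2) ≤ 52*M := by nlinarith
  have h1 : (EA+EB)*t ≤ (EA+EB)*(π*(s1+s2)) :=
    mul_le_mul_of_nonneg_left hup (by linarith)
  have h2 : (EA+EB)*(π*(s1+s2)) ≤ (A+B+C+D)*(π*(s1+s2)) :=
    mul_le_mul_of_nonneg_right hT
      (mul_nonneg Real.pi_pos.le (by linarith))
  have h3 : (A+B+C+D)*(π*(s1+s2)) = ((A+B+C+D)*(s1+s2)) * π := by ring
  have h4 : ((A+B+C+D)*(s1+s2)) * π ≤ ((A+B+C+D)*(s1+s2)) * 4 :=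
    mul_le_mul_of_nonneg_left Real.pi_le_four
      (mul_nonneg (by linarith) (by linarith))
  nlinarith

set_option maxHeartbeats 4000000 in
/-- **Nondegeneracy of the forcing directions for the two-point process.**
There are `C, R > 0` such that for all `x', y' ∈ ℝ²` distinct on the torus and all
`a, b ∈ ℝ²`, `|a| + |b| ≤ C d(x',y')⁻¹ max_{0 < |k| ≤ R} |u_k(x')·a + u_k(y')·b|`. -/
theorem two_point_nondegeneracy :
    ∃ C > (0 : ℝ), ∃ R > (0 : ℝ), ∀ x' y' : ℝ × ℝ,
      (∀ m : ℤ × ℤ,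
        (x'.1 - y'.1, x'.2 - y'.2) ≠ (2 * π * (m.1 : ℝ), 2 * π * (m.2 : ℝ))) →
      ∀ a b : ℝ × ℝ,
        enorm2 a + enorm2 b ≤ C * (torusDist x' y')⁻¹ *
          sSup {t | ∃ k : ℤ × ℤ, k ≠ 0 ∧ (k.1 : ℝ) ^ 2 + (k.2 : ℝ) ^ 2 ≤ R ^ 2 ∧
            t = |dotR (uFun k x') a + dotR (uFun k y') b|} := by
  refine ⟨400, by norm_num, 2, by norm_num, ?_⟩
  intro x' y' hxy a b
  have hπ := Real.pi_pos
  set Kset : Set ℝ := {t | ∃ k : ℤ × ℤ, k ≠ 0 ∧ (k.1 : ℝ) ^ 2 + (k.2 : ℝ) ^ 2 ≤ (2:ℝ) ^ 2 ∧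
      t = |dotR (uFun k x') a + dotR (uFun k y') b|} with hKdef
  set M := sSup Kset with hMdef
  show enorm2 a + enorm2 b ≤ 400 * (torusDist x' y')⁻¹ * M
  -- ## Step 1: the sup is well behaved
  have habs_int : ∀ m : ℤ, |(m:ℝ)| ≤ (m:ℝ)^2 := by
    intro m
    rcases eq_or_ne m 0 with rfl | hm
    · simp
    · have h1 : (1:ℝ) ≤ |(m:ℝ)| := by
        rw [← Int.cast_abs]
        exact_mod_cast Int.one_le_abs hm
      nlinarith [sq_abs (m:ℝ), abs_nonneg (m:ℝ)]
  have hdotb : ∀ (k : ℤ × ℤ), k ≠ 0 → ∀ x c : ℝ × ℝ,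
      |dotR (uFun k x) c| ≤ |c.1| + |c.2| := by
    intro k hk x c
    have hn1 : (1:ℝ) ≤ (k.1:ℝ)^2 + (k.2:ℝ)^2 := by
      have hk' : k.1 ≠ 0 ∨ k.2 ≠ 0 := by
        by_contra hcon; push_neg at hcon
        exact hk (Prod.ext hcon.1 hcon.2)
      have hz : (1:ℤ) ≤ k.1^2 + k.2^2 := by
        rcases hk' with h | h
        · nlinarith [sq_nonneg k.2, Int.one_le_abs h, sq_abs k.1, abs_nonneg k.1]
        · nlinarith [sq_nonneg k.1, Int.one_le_abs h, sq_abs k.2, abs_nonneg k.2]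
      exact_mod_cast hz
    have hn0 : (0:ℝ) < (k.1:ℝ)^2 + (k.2:ℝ)^2 := by linarith
    rw [dot_uFun, abs_mul, abs_mul]
    have htrig : |(if 0 < k.1 ∨ (k.1 = 0 ∧ 0 < k.2)
        then -Real.cos ((k.1 : ℝ) * x.1 + (k.2 : ℝ) * x.2)
        else Real.sin ((k.1 : ℝ) * x.1 + (k.2 : ℝ) * x.2))| ≤ 1 := by
      split
      · rw [abs_neg]; exact Real.abs_cos_le_one _
      · exact Real.abs_sin_le_one _
    have hlin : |(-(k.2 : ℝ) * c.1 + (k.1 : ℝ) * c.2)|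
        ≤ ((k.1:ℝ)^2 + (k.2:ℝ)^2) * (|c.1| + |c.2|) := by
      have e1 : |(k.2:ℝ)| ≤ (k.1:ℝ)^2 + (k.2:ℝ)^2 := by
        have := habs_int k.2; nlinarith [sq_nonneg (k.1:ℝ)]
      have e2 : |(k.1:ℝ)| ≤ (k.1:ℝ)^2 + (k.2:ℝ)^2 := by
        have := habs_int k.1; nlinarith [sq_nonneg (k.2:ℝ)]
      calc |(-(k.2 : ℝ) * c.1 + (k.1 : ℝ) * c.2)|
          ≤ |(-(k.2:ℝ)) * c.1| + |(k.1:ℝ) * c.2| := abs_add_le _ _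
        _ = |(k.2:ℝ)| * |c.1| + |(k.1:ℝ)| * |c.2| := by
            rw [abs_mul, abs_mul, abs_neg]
        _ ≤ ((k.1:ℝ)^2 + (k.2:ℝ)^2) * (|c.1| + |c.2|) := by
            nlinarith [abs_nonneg c.1, abs_nonneg c.2, abs_nonneg (k.1:ℝ), abs_nonneg (k.2:ℝ)]
    have hinv : |((k.1:ℝ)^2 + (k.2:ℝ)^2)⁻¹| = ((k.1:ℝ)^2 + (k.2:ℝ)^2)⁻¹ :=
      abs_of_pos (by positivity)
    rw [hinv]
    have hne := hn0.ne'
    calc ((k.1:ℝ)^2 + (k.2:ℝ)^2)⁻¹ *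
          |(if 0 < k.1 ∨ (k.1 = 0 ∧ 0 < k.2)
            then -Real.cos ((k.1 : ℝ) * x.1 + (k.2 : ℝ) * x.2)
            else Real.sin ((k.1 : ℝ) * x.1 + (k.2 : ℝ) * x.2))| *
          |(-(k.2 : ℝ) * c.1 + (k.1 : ℝ) * c.2)|
        ≤ ((k.1:ℝ)^2 + (k.2:ℝ)^2)⁻¹ * 1 *
          (((k.1:ℝ)^2 + (k.2:ℝ)^2) * (|c.1| + |c.2|)) := by
          apply mul_le_mul (mul_le_mul_of_nonneg_left htrig (inv_nonneg.mpr hn0.le)) hlin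
            (abs_nonneg _) (by positivity)
      _ = |c.1| + |c.2| := by field_simp
  have hBdd : BddAbove Kset := by
    refine ⟨|a.1| + |a.2| + (|b.1| + |b.2|), ?_⟩
    rintro t ⟨k, hk0, -, rfl⟩
    exact le_trans (abs_add_le _ _) (add_le_add (hdotb k hk0 x' a) (hdotb k hk0 y' b))
  have hmem : ∀ k : ℤ × ℤ, k ≠ 0 → (k.1:ℝ)^2 + (k.2:ℝ)^2 ≤ (2:ℝ)^2 →
      |dotR (uFun k x') a + dotR (uFun k y') b| ≤ M := by
    intro k h1 h2
    exact le_csSup hBdd ⟨k, h1, h2, rfl⟩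
  have hM0 : 0 ≤ M := le_trans (abs_nonneg _) (hmem (1,0) (by decide) (by norm_num))
  -- ## Step 2: the ten mode constraints
  have m1 := hmem (1,0) (by decide) (by norm_num)
  rw [du_a, du_a] at m1
  have c1 : |Real.cos x'.1 * a.2 + Real.cos y'.1 * b.2| ≤ M := by
    rwa [show -(Real.cos x'.1 * a.2) + -(Real.cos y'.1 * b.2)
      = -(Real.cos x'.1 * a.2 + Real.cos y'.1 * b.2) by ring, abs_neg] at m1
  have m2 := hmem (-1,0) (by decide) (by norm_num)
  rw [du_b, du_b] at m2
  have m3 := hmem (0,1) (by decide) (by norm_num)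
  rw [du_c, du_c] at m3
  have m4 := hmem (0,-1) (by decide) (by norm_num)
  rw [du_d, du_d] at m4
  have c4 : |Real.sin x'.2 * a.1 + Real.sin y'.2 * b.1| ≤ M := by
    rwa [show -(Real.sin x'.2 * a.1) + -(Real.sin y'.2 * b.1)
      = -(Real.sin x'.2 * a.1 + Real.sin y'.2 * b.1) by ring, abs_neg] at m4
  have m5 := hmem (1,1) (by decide) (by norm_num)
  rw [du_e, du_e] at m5
  have c5 : |Real.cos (x'.1+x'.2) * (a.1-a.2) + Real.cos (y'.1+y'.2) * (b.1-b.2)| ≤ 2*M := by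
    apply half_abs
    rwa [show (Real.cos (x'.1+x'.2) * (a.1-a.2) + Real.cos (y'.1+y'.2) * (b.1-b.2))/2
      = Real.cos (x'.1+x'.2) * (a.1-a.2)/2 + Real.cos (y'.1+y'.2) * (b.1-b.2)/2 by ring]
  have m6 := hmem (-1,-1) (by decide) (by norm_num)
  rw [du_f, du_f] at m6
  have c6 : |Real.sin (x'.1+x'.2) * (a.1-a.2) + Real.sin (y'.1+y'.2) * (b.1-b.2)| ≤ 2*M := by
    rw [show Real.sin (x'.1+x'.2) * (a.1-a.2) + Real.sin (y'.1+y'.2) * (b.1-b.2)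
      = -(-(Real.sin (x'.1+x'.2) * (a.1-a.2) + Real.sin (y'.1+y'.2) * (b.1-b.2))) by ring,
      abs_neg]
    apply half_abs
    rwa [show (-(Real.sin (x'.1+x'.2) * (a.1-a.2) + Real.sin (y'.1+y'.2) * (b.1-b.2)))/2
      = -(Real.sin (x'.1+x'.2) * (a.1-a.2))/2 + -(Real.sin (y'.1+y'.2) * (b.1-b.2))/2 by ring]
  have m7 := hmem (2,0) (by decide) (by norm_num)
  rw [du_g, du_g] at m7
  have c7 : |Real.cos (2*x'.1) * a.2 + Real.cos (2*y'.1) * b.2| ≤ 2*M := by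
    rw [show Real.cos (2*x'.1) * a.2 + Real.cos (2*y'.1) * b.2
      = -(-(Real.cos (2*x'.1) * a.2 + Real.cos (2*y'.1) * b.2)) by ring, abs_neg]
    apply half_abs
    rwa [show (-(Real.cos (2*x'.1) * a.2 + Real.cos (2*y'.1) * b.2))/2
      = -(Real.cos (2*x'.1) * a.2)/2 + -(Real.cos (2*y'.1) * b.2)/2 by ring]
  have m8 := hmem (-2,0) (by decide) (by norm_num)
  rw [du_h, du_h] at m8
  have c8 : |Real.sin (2*x'.1) * a.2 + Real.sin (2*y'.1) * b.2| ≤ 2*M := by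
    apply half_abs
    rwa [show (Real.sin (2*x'.1) * a.2 + Real.sin (2*y'.1) * b.2)/2
      = Real.sin (2*x'.1) * a.2/2 + Real.sin (2*y'.1) * b.2/2 by ring]
  have m9 := hmem (0,2) (by decide) (by norm_num)
  rw [du_i, du_i] at m9
  have c9 : |Real.cos (2*x'.2) * a.1 + Real.cos (2*y'.2) * b.1| ≤ 2*M := by
    apply half_abs
    rwa [show (Real.cos (2*x'.2) * a.1 + Real.cos (2*y'.2) * b.1)/2
      = Real.cos (2*x'.2) * a.1/2 + Real.cos (2*y'.2) * b.1/2 by ring]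
  have m10 := hmem (0,-2) (by decide) (by norm_num)
  rw [du_j, du_j] at m10
  have c10 : |Real.sin (2*x'.2) * a.1 + Real.sin (2*y'.2) * b.1| ≤ 2*M := by
    rw [show Real.sin (2*x'.2) * a.1 + Real.sin (2*y'.2) * b.1
      = -(-(Real.sin (2*x'.2) * a.1 + Real.sin (2*y'.2) * b.1)) by ring, abs_neg]
    apply half_abs
    rwa [show (-(Real.sin (2*x'.2) * a.1 + Real.sin (2*y'.2) * b.1))/2
      = -(Real.sin (2*x'.2) * a.1)/2 + -(Real.sin (2*y'.2) * b.1)/2 by ring]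
  -- ## Step 3: half-angle combinations
  obtain ⟨B1u, B1v⟩ := combo x'.1 y'.1 a.2 b.2 M c1 m2
  obtain ⟨B2u, B2v⟩ := combo x'.2 y'.2 a.1 b.1 M m3 c4
  obtain ⟨-, B3v⟩ := combo (x'.1+x'.2) (y'.1+y'.2) (a.1-a.2) (b.1-b.2) (2*M) c5 c6
  obtain ⟨B4u, -⟩ := combo (2*x'.1) (2*y'.1) a.2 b.2 (2*M) c7 c8
  obtain ⟨B5u, -⟩ := combo (2*x'.2) (2*y'.2) a.1 b.1 (2*M) c9 c10
  rw [show (2*x'.1 - 2*y'.1)/2 = 2*((x'.1-y'.1)/2) by ring, Real.cos_two_mul] at B4u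
  rw [show (2*x'.2 - 2*y'.2)/2 = 2*((x'.2-y'.2)/2) by ring, Real.cos_two_mul] at B5u
  rw [show ((x'.1+x'.2) - (y'.1+y'.2))/2 = (x'.1-y'.1)/2 + (x'.2-y'.2)/2 by ring,
    Real.sin_add] at B3v
  -- ## Step 4: recover the coefficients
  have hU2 : |a.2+b.2| ≤ 8*M := by
    apply coreU (Real.cos ((x'.1-y'.1)/2)) _ M hM0
    · rw [← abs_mul]; exact B1u
    · rw [← abs_mul]; linarith [B4u]
  have hU1 : |a.1+b.1| ≤ 8*M := by
    apply coreU (Real.cos ((x'.2-y'.2)/2)) _ M hM0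
    · rw [← abs_mul]; exact B2u
    · rw [← abs_mul]; linarith [B5u]
  have e5main : |(a.1-b.1) - (a.2-b.2)| * |Real.sin ((x'.1-y'.1)/2) * Real.cos ((x'.2-y'.2)/2)
      + Real.cos ((x'.1-y'.1)/2) * Real.sin ((x'.2-y'.2)/2)| ≤ 4*M := by
    rw [← abs_mul, show (a.1-b.1) - (a.2-b.2) = (a.1-a.2) - (b.1-b.2) by ring]
    linarith [B3v]
  have hV2 : |a.2-b.2| * (|Real.sin ((x'.1-y'.1)/2)| + |Real.sin ((x'.2-y'.2)/2)|) ≤ 10*M := by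
    apply coreV _ (Real.cos ((x'.1-y'.1)/2)) _ (Real.cos ((x'.2-y'.2)/2)) (a.1-b.1) _ M hM0
      (Real.abs_sin_le_one _) (Real.abs_cos_le_one _) (Real.sin_sq_add_cos_sq _)
    · rw [← abs_mul]; exact B1v
    · rw [← abs_mul]; exact B2v
    · exact e5main
  have hV1 : |a.1-b.1| * (|Real.sin ((x'.2-y'.2)/2)| + |Real.sin ((x'.1-y'.1)/2)|) ≤ 10*M := by
    apply coreV _ (Real.cos ((x'.2-y'.2)/2)) _ (Real.cos ((x'.1-y'.1)/2)) (a.2-b.2) _ M hM0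
      (Real.abs_sin_le_one _) (Real.abs_cos_le_one _) (Real.sin_sq_add_cos_sq _)
    · rw [← abs_mul]; exact B2v
    · rw [← abs_mul]; exact B1v
    · rw [show (a.2-b.2) - (a.1-b.1) = -((a.1-b.1) - (a.2-b.2)) by ring, abs_neg,
        show Real.sin ((x'.2-y'.2)/2) * Real.cos ((x'.1-y'.1)/2)
          + Real.cos ((x'.2-y'.2)/2) * Real.sin ((x'.1-y'.1)/2)
          = Real.sin ((x'.1-y'.1)/2) * Real.cos ((x'.2-y'.2)/2)
          + Real.cos ((x'.1-y'.1)/2) * Real.sin ((x'.2-y'.2)/2) by ring]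
      exact e5main
  -- ## Step 5: torus distance versus half-angle sines
  have hlow : |Real.sin ((x'.1-y'.1)/2)| + |Real.sin ((x'.2-y'.2)/2)| ≤ torusDist x' y' := by
    rw [torusDist]
    have hne : Set.Nonempty {t | ∃ m : ℤ × ℤ,
        t = enorm2 (x'.1 - y'.1 - 2*π*(m.1:ℝ), x'.2 - y'.2 - 2*π*(m.2:ℝ))} :=
      ⟨enorm2 (x'.1 - y'.1 - 2*π*(((0:ℤ),(0:ℤ)).1:ℝ), x'.2 - y'.2 - 2*π*(((0:ℤ),(0:ℤ)).2:ℝ)),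
        ⟨((0:ℤ),(0:ℤ)), rfl⟩⟩
    apply le_csInf hne
    rintro t ⟨m, rfl⟩
    have k1 : 2*|Real.sin ((x'.1-y'.1)/2)| ≤ |x'.1 - y'.1 - 2*π*(m.1:ℝ)| := by
      have hsh := sin_half_shift (x'.1-y'.1) m.1
      have h2 := Real.abs_sin_le_abs (x := (x'.1 - y'.1 - 2*π*(m.1:ℝ))/2)
      rw [hsh, abs_div, abs_two] at h2
      linarith
    have k2 : 2*|Real.sin ((x'.2-y'.2)/2)| ≤ |x'.2 - y'.2 - 2*π*(m.2:ℝ)| := by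
      have hsh := sin_half_shift (x'.2-y'.2) m.2
      have h2 := Real.abs_sin_le_abs (x := (x'.2 - y'.2 - 2*π*(m.2:ℝ))/2)
      rw [hsh, abs_div, abs_two] at h2
      linarith
    have k3 : |x'.1 - y'.1 - 2*π*(m.1:ℝ)|
        ≤ enorm2 (x'.1 - y'.1 - 2*π*(m.1:ℝ), x'.2 - y'.2 - 2*π*(m.2:ℝ)) :=
      abs_le_sqrt2 _ _
    have k4 : |x'.2 - y'.2 - 2*π*(m.2:ℝ)|
        ≤ enorm2 (x'.1 - y'.1 - 2*π*(m.1:ℝ), x'.2 - y'.2 - 2*π*(m.2:ℝ)) := by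
      have h := abs_le_sqrt2 (x'.2 - y'.2 - 2*π*(m.2:ℝ)) (x'.1 - y'.1 - 2*π*(m.1:ℝ))
      rw [show (x'.2 - y'.2 - 2*π*(m.2:ℝ))^2 + (x'.1 - y'.1 - 2*π*(m.1:ℝ))^2
        = (x'.1 - y'.1 - 2*π*(m.1:ℝ))^2 + (x'.2 - y'.2 - 2*π*(m.2:ℝ))^2 by ring] at h
      exact h
    linarith
  have hup : torusDist x' y'
      ≤ π * (|Real.sin ((x'.1-y'.1)/2)| + |Real.sin ((x'.2-y'.2)/2)|) := by
    rw [torusDist]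
    have hBdd0 : BddBelow {t | ∃ m : ℤ × ℤ,
        t = enorm2 (x'.1 - y'.1 - 2*π*(m.1:ℝ), x'.2 - y'.2 - 2*π*(m.2:ℝ))} := by
      refine ⟨0, ?_⟩
      rintro t ⟨m, rfl⟩
      exact Real.sqrt_nonneg _
    have hm2π : (0:ℝ) < 2*π := by linarith
    have hw1 : |x'.1 - y'.1 - 2*π*((round ((x'.1-y'.1)/(2*π)) : ℤ):ℝ)| ≤ π := by
      have h := abs_sub_round ((x'.1-y'.1)/(2*π))
      have e : x'.1 - y'.1 - 2*π*((round ((x'.1-y'.1)/(2*π)) : ℤ):ℝ)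
          = (2*π) * ((x'.1-y'.1)/(2*π) - ((round ((x'.1-y'.1)/(2*π)) : ℤ):ℝ)) := by
        field_simp
      rw [e, abs_mul, abs_of_pos hm2π]
      nlinarith
    have hw2 : |x'.2 - y'.2 - 2*π*((round ((x'.2-y'.2)/(2*π)) : ℤ):ℝ)| ≤ π := by
      have h := abs_sub_round ((x'.2-y'.2)/(2*π))
      have e : x'.2 - y'.2 - 2*π*((round ((x'.2-y'.2)/(2*π)) : ℤ):ℝ)
          = (2*π) * ((x'.2-y'.2)/(2*π) - ((round ((x'.2-y'.2)/(2*π)) : ℤ):ℝ)) := by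
        field_simp
      rw [e, abs_mul, abs_of_pos hm2π]
      nlinarith
    have hb1 := half_bound _ hw1
    rw [sin_half_shift] at hb1
    have hb2 := half_bound _ hw2
    rw [sin_half_shift] at hb2
    refine le_trans (csInf_le hBdd0
      ⟨((round ((x'.1-y'.1)/(2*π)) : ℤ), (round ((x'.2-y'.2)/(2*π)) : ℤ)), rfl⟩) ?_
    have hel : enorm2 (x'.1 - y'.1 - 2*π*((round ((x'.1-y'.1)/(2*π)) : ℤ):ℝ),
        x'.2 - y'.2 - 2*π*((round ((x'.2-y'.2)/(2*π)) : ℤ):ℝ))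
        ≤ |x'.1 - y'.1 - 2*π*((round ((x'.1-y'.1)/(2*π)) : ℤ):ℝ)|
          + |x'.2 - y'.2 - 2*π*((round ((x'.2-y'.2)/(2*π)) : ℤ):ℝ)| :=
      sqrt_le_abs_add _ _
    linarith
  have hS0 : 0 < |Real.sin ((x'.1-y'.1)/2)| + |Real.sin ((x'.2-y'.2)/2)| := by
    by_contra hcon
    push_neg at hcon
    have hn1 : |Real.sin ((x'.1-y'.1)/2)| = 0 := by
      have h1 := abs_nonneg (Real.sin ((x'.1-y'.1)/2))
      have h2 := abs_nonneg (Real.sin ((x'.2-y'.2)/2))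
      linarith
    have hn2 : |Real.sin ((x'.2-y'.2)/2)| = 0 := by
      have h1 := abs_nonneg (Real.sin ((x'.1-y'.1)/2))
      have h2 := abs_nonneg (Real.sin ((x'.2-y'.2)/2))
      linarith
    rcases Real.sin_eq_zero_iff.mp (abs_eq_zero.mp hn1) with ⟨n1, hnn1⟩
    rcases Real.sin_eq_zero_iff.mp (abs_eq_zero.mp hn2) with ⟨n2, hnn2⟩
    apply hxy (n1, n2)
    simp only [Prod.mk.injEq]
    constructor
    · linarith
    · linarith
  have ht0 : 0 < torusDist x' y' := lt_of_lt_of_le hS0 hlow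
  -- ## Step 6: conclusion
  have hA : enorm2 a ≤ |a.1| + |a.2| := sqrt_le_abs_add a.1 a.2
  have hB : enorm2 b ≤ |b.1| + |b.2| := sqrt_le_abs_add b.1 b.2
  have t1 : 2*|a.1| ≤ |a.1+b.1| + |a.1-b.1| := by
    have h := abs_add_le (a.1+b.1) (a.1-b.1)
    rw [show (a.1+b.1)+(a.1-b.1) = 2*a.1 by ring,
      show |2*a.1| = 2*|a.1| by rw [abs_mul, abs_two]] at h
    linarith
  have t2 : 2*|b.1| ≤ |a.1+b.1| + |a.1-b.1| := by
    have h := abs_add_le (a.1+b.1) (-(a.1-b.1))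
    rw [show (a.1+b.1) + -(a.1-b.1) = 2*b.1 by ring, abs_neg,
      show |2*b.1| = 2*|b.1| by rw [abs_mul, abs_two]] at h
    linarith
  have t3 : 2*|a.2| ≤ |a.2+b.2| + |a.2-b.2| := by
    have h := abs_add_le (a.2+b.2) (a.2-b.2)
    rw [show (a.2+b.2)+(a.2-b.2) = 2*a.2 by ring,
      show |2*a.2| = 2*|a.2| by rw [abs_mul, abs_two]] at h
    linarith
  have t4 : 2*|b.2| ≤ |a.2+b.2| + |a.2-b.2| := by
    have h := abs_add_le (a.2+b.2) (-(a.2-b.2))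
    rw [show (a.2+b.2) + -(a.2-b.2) = 2*b.2 by ring, abs_neg,
      show |2*b.2| = 2*|b.2| by rw [abs_mul, abs_two]] at h
    linarith
  have hT : enorm2 a + enorm2 b
      ≤ |a.1+b.1| + |a.2+b.2| + |a.1-b.1| + |a.2-b.2| := by linarith
  have hen1 : (0:ℝ) ≤ enorm2 a := Real.sqrt_nonneg _
  have hen2 : (0:ℝ) ≤ enorm2 b := Real.sqrt_nonneg _
  have hV1' : |a.1-b.1| * (|Real.sin ((x'.1-y'.1)/2)| + |Real.sin ((x'.2-y'.2)/2)|)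
      ≤ 10*M := by
    rw [add_comm (|Real.sin ((x'.1-y'.1)/2)|) (|Real.sin ((x'.2-y'.2)/2)|)]
    exact hV1
  have hfin : (enorm2 a + enorm2 b) * torusDist x' y' ≤ 400*M :=
    final_arith (enorm2 a) (enorm2 b) (|a.1+b.1|) (|a.2+b.2|) (|a.1-b.1|) (|a.2-b.2|)
      (|Real.sin ((x'.1-y'.1)/2)|) (|Real.sin ((x'.2-y'.2)/2)|) (torusDist x' y') M
      hen1 hen2 hT (abs_nonneg _) (abs_nonneg _) (abs_nonneg _) (abs_nonneg _)
      hU1 hU2 hV1' hV2 (abs_nonneg _) (abs_nonneg _)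
      (Real.abs_sin_le_one _) (Real.abs_sin_le_one _) hM0 hup
  have hres := (le_div_iff₀ ht0).mpr hfin
  calc enorm2 a + enorm2 b ≤ 400*M / torusDist x' y' := hres
    _ = 400 * (torusDist x' y')⁻¹ * M := by rw [div_eq_mul_inv]; ring
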